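/- Near-uniformity of a random entry of a random matrix from a large set: let D, N, L be positive integers and c ≥ 0 a real number. Let S be a nonempty subset of the set of functions {1,…,D} × {1,…,N} → {0,1}^L (D×N matrices with entries in {0,1}^L) with |S| ≥ 2^{D·N·L − c}. Fix a row index ρ ∈ {1,…,D}. Let q be the pmf on {0,1}^L of the entry A(ρ, J) when A is drawn uniformly from S and J is drawn uniformly from {1,…,N} independently of A, i.e., q(y) = (1/N) · ∑_{j=1}^{N} |{A ∈ S : A(ρ, j) = y}| / |S|. Then the statistical distance between q and the uniform pmf u_L on {0,1}^L (u_L(y) = 2^{−L} for all y) satisfies SD(q, u_L) ≤ √(c/(2N)). (Combination of the entropy chain with Claim 2.5, establishing Equation (SD:R') in the proof of Lemma 3.2.) -/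

import Mathlib

open Finset

open scoped Classical in
/-- `p` is a probability mass function on the finite type `Ω`. -/
def IsPMF {Ω : Type*} [Fintype Ω] (p : Ω → ℝ) : Prop :=
  (∀ x, 0 ≤ p x) ∧ ∑ x, p x = 1

open scoped Classical in
/-- Statistical distance between two pmfs on a finite type. -/
noncomputable def SD {Ω : Type*} [Fintype Ω] (p q : Ω → ℝ) : ℝ :=
  (1 / 2) * ∑ x, |p x - q x|

open scoped Classical in
/-- Base-2 Shannon entropy of a pmf on a finite type. -/
noncomputable def H2 {Ω : Type*} [Fintype Ω] (p : Ω → ℝ) : ℝ :=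
  ∑ x, if p x = 0 then 0 else p x * Real.logb 2 (1 / p x)

open scoped Classical in
/-- Base-2 Kullback–Leibler divergence between two pmfs on a finite type. -/
noncomputable def KL2 {Ω : Type*} [Fintype Ω] (p q : Ω → ℝ) : ℝ :=
  ∑ x, if p x = 0 then 0 else p x * Real.logb 2 (p x / q x)

section AuxSD
open Finset Real
set_option linter.unusedSectionVars false

/-- Log-sum inequality (natural log, Lean junk-value conventions handle zeros). -/
lemma log_sum_ineq {ι : Type*} (s : Finset ι) (a b : ι → ℝ)
    (ha : ∀ i ∈ s, 0 ≤ a i) (hb : ∀ i ∈ s, 0 < b i) :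
    (∑ i ∈ s, a i) * Real.log ((∑ i ∈ s, a i) / (∑ i ∈ s, b i)) ≤
      ∑ i ∈ s, a i * Real.log (a i / b i) := by
  set A := ∑ i ∈ s, a i with hA
  set B := ∑ i ∈ s, b i with hB
  have hA0 : 0 ≤ A := Finset.sum_nonneg ha
  rcases eq_or_lt_of_le hA0 with h0 | hApos
  · -- A = 0, so all a i = 0
    have hall : ∀ i ∈ s, a i = 0 := by
      intro i hi
      have := (Finset.sum_eq_zero_iff_of_nonneg ha).1 h0.symm
      exact this i hi
    have : ∑ i ∈ s, a i * Real.log (a i / b i) = 0 :=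
      Finset.sum_eq_zero fun i hi => by rw [hall i hi]; ring
    rw [this, ← h0]; simp
  · -- A > 0, hence s nonempty, B > 0
    have hsne : s.Nonempty := by
      by_contra h
      rw [Finset.not_nonempty_iff_eq_empty] at h
      rw [hA, h] at hApos; simp at hApos
    have hBpos : 0 < B := Finset.sum_pos hb hsne
    have key : ∀ i ∈ s, a i * Real.log (A / B) + (a i - b i * A / B) ≤
        a i * Real.log (a i / b i) := by
      intro i hi
      rcases eq_or_lt_of_le (ha i hi) with h0 | hpos
      · rw [← h0]; simp
        exact div_nonneg (mul_nonneg (hb i hi).le hApos.le) hBpos.le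
      · have hbi := hb i hi
        have hx : 0 < a i * B / (b i * A) := by positivity
        have hlog := Real.one_sub_inv_le_log_of_pos hx
        have hinv : (a i * B / (b i * A))⁻¹ = b i * A / (a i * B) := by
          rw [inv_div]
        rw [hinv] at hlog
        have hlogeq : Real.log (a i * B / (b i * A)) =
            Real.log (a i / b i) - Real.log (A / B) := by
          rw [Real.log_div (by positivity) (by positivity),
            Real.log_div hpos.ne' hbi.ne', Real.log_div hApos.ne' hBpos.ne',
            Real.log_mul hpos.ne' hBpos.ne', Real.log_mul hbi.ne' hApos.ne']
          ring
        rw [hlogeq] at hlog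
        have := mul_le_mul_of_nonneg_left hlog (le_of_lt hpos)
        have heq : a i * (1 - b i * A / (a i * B)) = a i - b i * A / B := by
          field_simp
        rw [heq] at this
        nlinarith
    calc A * Real.log (A / B)
        = ∑ i ∈ s, (a i * Real.log (A / B) + (a i - b i * A / B)) := by
          rw [Finset.sum_add_distrib, ← Finset.sum_mul, Finset.sum_sub_distrib]
          rw [← hA]
          have : ∑ i ∈ s, b i * A / B = B * A / B := by
            rw [← Finset.sum_div, ← Finset.sum_mul, ← hB]
          rw [this]
          field_simp
          ring
      _ ≤ ∑ i ∈ s, a i * Real.log (a i / b i) := Finset.sum_le_sum key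

lemma pinsker_binary {a b : ℝ} (hb : 0 < b) (hba : b ≤ a) (ha1 : a ≤ 1) (hb1 : b < 1) :
    2 * (a - b) ^ 2 ≤
      a * Real.log (a / b) + (1 - a) * Real.log ((1 - a) / (1 - b)) := by
  set G : ℝ → ℝ := fun x => Real.log x - Real.log (1 - x) - Real.log b
      + Real.log (1 - b) - 4 * (x - b) with hG
  set F : ℝ → ℝ := fun x => x * Real.log x - x * Real.log b
      + (1 - x) * Real.log (1 - x) - (1 - x) * Real.log (1 - b)
      - 2 * (x - b) ^ 2 with hF
  -- G is nonneg on Ioo b 1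
  have hGderiv : ∀ x ∈ Set.Ioo b 1, HasDerivAt G (x⁻¹ + (1 - x)⁻¹ - 4) x := by
    intro x hx
    have hx0 : 0 < x := lt_of_lt_of_le hb hx.1.le
    have h1x : 0 < 1 - x := by linarith [hx.2]
    have h2 : HasDerivAt (fun y : ℝ => 1 - y) (-1) x := (hasDerivAt_id x).const_sub 1
    have h3 : HasDerivAt (fun y : ℝ => Real.log (1 - y)) ((1 - x)⁻¹ * (-1)) x :=
      (Real.hasDerivAt_log h1x.ne').comp x h2
    have h4 : HasDerivAt (fun y : ℝ => 4 * (y - b)) 4 x := by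
      simpa using ((hasDerivAt_id x).sub_const b).const_mul 4
    have h1 : HasDerivAt Real.log x⁻¹ x := Real.hasDerivAt_log hx0.ne'
    have := ((((h1.sub h3).sub_const (Real.log b)).add_const (Real.log (1 - b))).sub h4)
    exact this.congr_deriv (by ring)
  have hGmono : MonotoneOn G (Set.Ico b 1) := by
    apply monotoneOn_of_deriv_nonneg (convex_Ico b 1)
    · apply ContinuousOn.sub
      apply ContinuousOn.add
      apply ContinuousOn.sub
      apply ContinuousOn.sub
      · exact Real.continuousOn_log.mono (by
          intro x hx
          simp only [Set.mem_compl_iff, Set.mem_singleton_iff]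
          exact ne_of_gt (lt_of_lt_of_le hb hx.1))
      · apply ContinuousOn.log
        · exact (continuous_const.sub continuous_id).continuousOn
        · intro x hx
          have : x < 1 := hx.2
          intro h; linarith
      all_goals try exact continuousOn_const
      exact (continuous_const.mul (continuous_id.sub continuous_const)).continuousOn
    · rw [interior_Ico]
      intro x hx
      exact (hGderiv x hx).differentiableAt.differentiableWithinAt
    · rw [interior_Ico]
      intro x hx
      rw [(hGderiv x hx).deriv]
      have hx0 : 0 < x := lt_of_lt_of_le hb hx.1.le
      have h1x : 0 < 1 - x := by linarith [hx.2]
      have key : x⁻¹ + (1 - x)⁻¹ - 4 = (1 - 4 * (x * (1 - x))) / (x * (1 - x)) := by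
        field_simp
        ring
      rw [key]
      apply div_nonneg
      · nlinarith [sq_nonneg (1 - 2 * x)]
      · positivity
  have hGb : G b = 0 := by simp [hG]
  have hGnonneg : ∀ x ∈ Set.Ioo b 1, 0 ≤ G x := by
    intro x hx
    rw [← hGb]
    exact hGmono (Set.mem_Ico.2 ⟨le_refl b, hb1⟩) (Set.mem_Ico.2 ⟨hx.1.le, hx.2⟩) hx.1.le
  -- F has derivative G on Ioo b 1
  have hFderiv : ∀ x ∈ Set.Ioo b 1, HasDerivAt F (G x) x := by
    intro x hx
    have hx0 : 0 < x := lt_of_lt_of_le hb hx.1.le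
    have h1x : 0 < 1 - x := by linarith [hx.2]
    have h2 : HasDerivAt (fun y : ℝ => 1 - y) (-1) x := (hasDerivAt_id x).const_sub 1
    have d1 : HasDerivAt (fun y : ℝ => y * Real.log y) (Real.log x + 1) x :=
      Real.hasDerivAt_mul_log hx0.ne'
    have d2 : HasDerivAt (fun y : ℝ => y * Real.log b) (1 * Real.log b) x :=
      (hasDerivAt_id x).mul_const _
    have d3 : HasDerivAt (fun y : ℝ => (1 - y) * Real.log (1 - y))
        ((Real.log (1 - x) + 1) * (-1)) x :=
      (Real.hasDerivAt_mul_log h1x.ne').comp x h2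
    have d4 : HasDerivAt (fun y : ℝ => (1 - y) * Real.log (1 - b))
        ((-1) * Real.log (1 - b)) x := h2.mul_const _
    have d5 : HasDerivAt (fun y : ℝ => 2 * (y - b) ^ 2) (2 * (2 * (x - b))) x := by
      simpa using (((hasDerivAt_id x).sub_const b).pow 2).const_mul 2
    have := (((d1.sub d2).add d3).sub d4).sub d5
    exact this.congr_deriv (by simp only [hG]; ring)
  have hFcont : Continuous F := by
    have c1 : Continuous fun x : ℝ => x * Real.log x := Real.continuous_mul_log
    have c2 : Continuous fun x : ℝ => (1 - x) * Real.log (1 - x) :=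
      c1.comp (continuous_const.sub continuous_id)
    exact ((((c1.sub (continuous_id.mul continuous_const)).add c2).sub
      ((continuous_const.sub continuous_id).mul continuous_const)).sub
      ((continuous_const.mul ((continuous_id.sub continuous_const).pow 2))))
  have hFmono : MonotoneOn F (Set.Icc b 1) := by
    apply monotoneOn_of_deriv_nonneg (convex_Icc b 1) hFcont.continuousOn
    · rw [interior_Icc]
      intro x hx
      exact (hFderiv x hx).differentiableAt.differentiableWithinAt
    · rw [interior_Icc]
      intro x hx
      rw [(hFderiv x hx).deriv]
      exact hGnonneg x hx
  have hFb : F b = 0 := by simp [hF]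
  have hFa : 0 ≤ F a := by
    rw [← hFb]
    exact hFmono (Set.mem_Icc.2 ⟨le_refl b, hb1.le⟩) (Set.mem_Icc.2 ⟨hba, ha1⟩) hba
  have ha0 : 0 < a := lt_of_lt_of_le hb hba
  rcases eq_or_lt_of_le ha1 with h1 | h1
  · -- a = 1
    subst h1
    simp only [hF, Real.log_one, mul_zero, sub_self, zero_mul, mul_one] at hFa ⊢
    rw [Real.log_div one_ne_zero hb.ne']
    simp only [Real.log_one]
    simp at hFa
    nlinarith [hFa]
  · have h1a : 0 < 1 - a := by linarith
    rw [Real.log_div ha0.ne' hb.ne', Real.log_div h1a.ne' (by linarith : (1:ℝ) - b ≠ 0)]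
    simp only [hF] at hFa
    nlinarith [hFa]

section Pinsker
variable {Ω : Type*} [Fintype Ω]

lemma pinsker_nat (p q : Ω → ℝ)
    (hp0 : ∀ x, 0 ≤ p x) (hp1 : ∑ x, p x = 1)
    (hq0 : ∀ x, 0 < q x) (hq1 : ∑ x, q x = 1) :
    2 * ((1 / (2:ℝ)) * ∑ x, |p x - q x|) ^ 2 ≤ ∑ x, p x * Real.log (p x / q x) := by
  classical
  set E := Finset.univ.filter (fun x => q x ≤ p x) with hE
  set a := ∑ x ∈ E, p x with ha_def
  set b := ∑ x ∈ E, q x with hb_def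
  have hpE : ∀ x ∈ E, q x ≤ p x := fun x hx => (Finset.mem_filter.1 hx).2
  have hsum_p : a + ∑ x ∈ Finset.univ.filter (fun x => ¬ q x ≤ p x), p x = 1 := by
    rw [ha_def, hE, Finset.sum_filter_add_sum_filter_not]; exact hp1
  have hsum_q : b + ∑ x ∈ Finset.univ.filter (fun x => ¬ q x ≤ p x), q x = 1 := by
    rw [hb_def, hE, Finset.sum_filter_add_sum_filter_not]; exact hq1
  have e1 : ∑ x ∈ Finset.univ.filter (fun x => ¬ q x ≤ p x), p x = 1 - a := by linarith
  have e2 : ∑ x ∈ Finset.univ.filter (fun x => ¬ q x ≤ p x), q x = 1 - b := by linarith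
  have hba : b ≤ a := Finset.sum_le_sum hpE
  have hb0 : 0 ≤ b := Finset.sum_nonneg fun x _ => (hq0 x).le
  have ha1 : a ≤ 1 := by
    have : 0 ≤ ∑ x ∈ Finset.univ.filter (fun x => ¬ q x ≤ p x), p x :=
      Finset.sum_nonneg fun x _ => hp0 x
    linarith
  have habs : ∑ x, |p x - q x| = 2 * (a - b) := by
    rw [← Finset.sum_filter_add_sum_filter_not Finset.univ (fun x => q x ≤ p x)
      (fun x => |p x - q x|)]
    have h1 : ∑ x ∈ E, |p x - q x| = a - b := by
      rw [ha_def, hb_def, ← Finset.sum_sub_distrib]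
      exact Finset.sum_congr rfl fun x hx => abs_of_nonneg (by linarith [hpE x hx])
    have h2 : ∑ x ∈ Finset.univ.filter (fun x => ¬ q x ≤ p x), |p x - q x| = (1 - b) - (1 - a) := by
      rw [← e1, ← e2, ← Finset.sum_sub_distrib]
      refine Finset.sum_congr rfl fun x hx => ?_
      have : p x ≤ q x := le_of_not_ge (Finset.mem_filter.1 hx).2
      rw [abs_of_nonpos (by linarith)]; ring
    rw [h1, h2]; ring
  have hls1 : a * Real.log (a / b) ≤ ∑ x ∈ E, p x * Real.log (p x / q x) := by
    rw [ha_def, hb_def]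
    exact log_sum_ineq E p q (fun x _ => hp0 x) (fun x _ => hq0 x)
  have hls2 : (1 - a) * Real.log ((1 - a) / (1 - b)) ≤
      ∑ x ∈ Finset.univ.filter (fun x => ¬ q x ≤ p x), p x * Real.log (p x / q x) := by
    have := log_sum_ineq (Finset.univ.filter (fun x => ¬ q x ≤ p x)) p q
      (fun x _ => hp0 x) (fun x _ => hq0 x)
    rwa [e1, e2] at this
  have key : 2 * (a - b) ^ 2 ≤
      a * Real.log (a / b) + (1 - a) * Real.log ((1 - a) / (1 - b)) := by
    rcases eq_or_lt_of_le hba with heq | hlt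
    · rw [← heq]
      have t1 : b * Real.log (b / b) = 0 := by
        rcases eq_or_ne b 0 with h | h
        · simp [h]
        · simp [div_self h]
      have t2 : (1 - b) * Real.log ((1 - b) / (1 - b)) = 0 := by
        rcases eq_or_ne (1 - b) 0 with h | h
        · simp [h]
        · simp [div_self h]
      rw [t1, t2]; simp
    · have ha_pos : 0 < a := lt_of_le_of_lt hb0 hlt
      have hEne : E.Nonempty := by
        by_contra h
        rw [Finset.not_nonempty_iff_eq_empty] at h
        rw [ha_def, h] at ha_pos; simp at ha_pos
      have hb_pos : 0 < b := Finset.sum_pos (fun x _ => hq0 x) hEne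
      have hb1 : b < 1 := by
        rcases Finset.eq_empty_or_nonempty (Finset.univ.filter (fun x => ¬ q x ≤ p x)) with h | h
        · exfalso
          rw [h] at e1 e2
          simp at e1 e2
          linarith
        · have : 0 < ∑ x ∈ Finset.univ.filter (fun x => ¬ q x ≤ p x), q x :=
            Finset.sum_pos (fun x _ => hq0 x) h
          linarith
      exact pinsker_binary hb_pos hba ha1 hb1
  rw [habs]
  have hsplit : ∑ x, p x * Real.log (p x / q x) =
      (∑ x ∈ E, p x * Real.log (p x / q x)) +
      ∑ x ∈ Finset.univ.filter (fun x => ¬ q x ≤ p x), p x * Real.log (p x / q x) := by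
    rw [hE, Finset.sum_filter_add_sum_filter_not]
  calc 2 * (1 / 2 * (2 * (a - b))) ^ 2 = 2 * (a - b) ^ 2 := by ring
    _ ≤ a * Real.log (a / b) + (1 - a) * Real.log ((1 - a) / (1 - b)) := key
    _ ≤ _ := by rw [hsplit]; exact add_le_add hls1 hls2

end Pinsker

section Subadd
variable {K V : Type*} [Fintype K] [Fintype V] [DecidableEq V]

lemma marg_card_sum (S : Finset (K → V)) (k : K) :
    ∑ v : V, ((S.filter fun A => A k = v).card : ℝ) = S.card := by
  rw [← Nat.cast_sum]
  congr 1
  calc ∑ v : V, (S.filter fun A => A k = v).card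
      = ∑ v : V, ∑ _A ∈ S.filter fun A => A k = v, 1 := by
        exact Finset.sum_congr rfl fun v _ => Finset.card_eq_sum_ones _
    _ = ∑ _A ∈ S, 1 := Finset.sum_fiberwise S (fun A => A k) (fun _ => 1)
    _ = S.card := by simp

lemma group_fiber (S : Finset (K → V)) (k : K) (f : V → ℝ) :
    ∑ A ∈ S, f (A k) = ∑ v : V, ((S.filter fun A => A k = v).card : ℝ) * f v := by
  rw [← Finset.sum_fiberwise' S (fun A => A k) f]
  refine Finset.sum_congr rfl fun v _ => ?_
  rw [Finset.sum_const, nsmul_eq_mul]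

/-- Entropy is at most log of the cardinality. -/
lemma neg_sum_mul_log_le {Ω : Type*} [Fintype Ω] (p : Ω → ℝ)
    (hp0 : ∀ x, 0 ≤ p x) (hp1 : ∑ x, p x = 1) :
    -∑ x, p x * Real.log (p x) ≤ Real.log (Fintype.card Ω) := by
  rcases isEmpty_or_nonempty Ω with h | h
  · rw [Finset.univ_eq_empty] at hp1; simp at hp1
  have hcard : (0:ℝ) < Fintype.card Ω := by
    exact_mod_cast Fintype.card_pos
  have hls := log_sum_ineq Finset.univ p (fun _ => (1:ℝ)) (fun x _ => hp0 x)
    (fun x _ => one_pos)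
  simp only [Finset.sum_const, Finset.card_univ, nsmul_eq_mul, mul_one, div_one] at hls
  rw [hp1, one_mul, Real.log_div one_ne_zero hcard.ne', Real.log_one] at hls
  linarith

/-- Subadditivity of entropy for the uniform distribution on `S`. -/
lemma subadditivity (S : Finset (K → V)) (hS : S.Nonempty) :
    Real.log S.card ≤ ∑ k : K,
      -(∑ v : V, (((S.filter fun A => A k = v).card : ℝ) / S.card) *
        Real.log (((S.filter fun A => A k = v).card : ℝ) / S.card)) := by
  classical
  set m : K → V → ℝ := fun k v => ((S.filter fun A => A k = v).card : ℝ) / S.card with hm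
  have hScard : (0:ℝ) < S.card := by exact_mod_cast Finset.card_pos.2 hS
  have hmnn : ∀ k v, 0 ≤ m k v := fun k v => by positivity
  have hmpos : ∀ (k : K) (A : K → V), A ∈ S → 0 < m k (A k) := by
    intro k A hA
    have : 0 < (S.filter fun B => B k = A k).card :=
      Finset.card_pos.2 ⟨A, Finset.mem_filter.2 ⟨hA, rfl⟩⟩
    have : (0:ℝ) < (S.filter fun B => B k = A k).card := by exact_mod_cast this
    exact div_pos this hScard
  have hmsum : ∀ k, ∑ v : V, m k v = 1 := by
    intro k
    rw [hm]
    simp only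
    rw [← Finset.sum_div, marg_card_sum S k, div_self hScard.ne']
  set Q : (K → V) → ℝ := fun A => ∏ k : K, m k (A k) with hQ
  have hQnn : ∀ A, 0 ≤ Q A := fun A => Finset.prod_nonneg fun k _ => hmnn k (A k)
  have hQsum : ∑ A : K → V, Q A = 1 := by
    rw [hQ]
    simp only
    rw [← Fintype.piFinset_univ, Finset.sum_prod_piFinset]
    simp [hmsum]
  have hQS : ∑ A ∈ S, Q A ≤ 1 := by
    rw [← hQsum]
    exact Finset.sum_le_sum_of_subset_of_nonneg (Finset.subset_univ S)
      (fun A _ _ => hQnn A)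
  have hQSpos : 0 < ∑ A ∈ S, Q A :=
    Finset.sum_pos (fun A hA => Finset.prod_pos fun k _ => hmpos k A hA) hS
  have hls := log_sum_ineq S (fun _ => (1:ℝ) / S.card) Q
    (fun A _ => by positivity) (fun A hA => Finset.prod_pos fun k _ => hmpos k A hA)
  beta_reduce at hls
  have hsum1 : ∑ _A ∈ S, (1:ℝ) / S.card = 1 := by
    rw [Finset.sum_const, nsmul_eq_mul]
    field_simp
  rw [hsum1, one_mul] at hls
  have hlhs : 0 ≤ Real.log (1 / ∑ A ∈ S, Q A) := by
    rw [Real.log_div one_ne_zero hQSpos.ne', Real.log_one]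
    have : Real.log (∑ A ∈ S, Q A) ≤ 0 := Real.log_nonpos hQSpos.le hQS
    linarith
  have hrhs : ∑ A ∈ S, (1:ℝ) / S.card * Real.log ((1 / S.card) / Q A) =
      -Real.log S.card - ∑ k : K, ∑ v : V, m k v * Real.log (m k v) := by
    have hstep : ∀ A ∈ S, (1:ℝ) / S.card * Real.log ((1 / S.card) / Q A) =
        (1 / S.card) * (-Real.log S.card - ∑ k : K, Real.log (m k (A k))) := by
      intro A hA
      rw [Real.log_div (by positivity) (Finset.prod_pos fun k _ => hmpos k A hA).ne',
        Real.log_div one_ne_zero hScard.ne', Real.log_one,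
        Real.log_prod (fun k _ => (hmpos k A hA).ne')]
      ring
    rw [Finset.sum_congr rfl hstep]
    rw [Finset.sum_congr rfl (fun A hA => mul_sub ((1:ℝ)/S.card) _ _),
      Finset.sum_sub_distrib]
    have h1 : ∑ _A ∈ S, (1:ℝ) / S.card * (-Real.log S.card) = -Real.log S.card := by
      rw [Finset.sum_const, nsmul_eq_mul]
      field_simp
    have h2 : ∑ A ∈ S, (1:ℝ) / S.card * ∑ k : K, Real.log (m k (A k)) =
        ∑ k : K, ∑ v : V, m k v * Real.log (m k v) := by
      calc ∑ A ∈ S, (1:ℝ) / S.card * ∑ k : K, Real.log (m k (A k))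
          = ∑ A ∈ S, ∑ k : K, (1:ℝ) / S.card * Real.log (m k (A k)) := by
            refine Finset.sum_congr rfl fun A _ => ?_
            rw [Finset.mul_sum]
        _ = ∑ k : K, ∑ A ∈ S, (1:ℝ) / S.card * Real.log (m k (A k)) :=
            Finset.sum_comm
        _ = ∑ k : K, (1:ℝ) / S.card * ∑ A ∈ S, Real.log (m k (A k)) := by
            refine Finset.sum_congr rfl fun k _ => ?_
            rw [Finset.mul_sum]
        _ = ∑ k : K, (1:ℝ) / S.card *
              ∑ v : V, ((S.filter fun A => A k = v).card : ℝ) * Real.log (m k v) := by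
            refine Finset.sum_congr rfl fun k _ => ?_
            rw [group_fiber S k (fun v => Real.log (m k v))]
        _ = ∑ k : K, ∑ v : V, m k v * Real.log (m k v) := by
            refine Finset.sum_congr rfl fun k _ => ?_
            rw [Finset.mul_sum]
            refine Finset.sum_congr rfl fun v _ => ?_
            simp only [hm]
            ring
    rw [h1, h2]
  rw [hrhs] at hls
  have : Real.log S.card ≤ -∑ k : K, ∑ v : V, m k v * Real.log (m k v) := by
    linarith
  calc Real.log S.card ≤ -∑ k : K, ∑ v : V, m k v * Real.log (m k v) := this
    _ = ∑ k : K, -(∑ v : V, m k v * Real.log (m k v)) := by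
        rw [← Finset.sum_neg_distrib]

end Subadd

end AuxSD

open scoped Classical in
/-- Near-uniformity of a random entry of a random matrix from a large set
(combination of the entropy chain with Claim 2.5, establishing Equation
(SD:R') in the proof of Lemma 3.2). -/
theorem sd_random_entry (D N L : ℕ) (hD : 0 < D) (hN : 0 < N) (hL : 0 < L)
    (c : ℝ) (hc : 0 ≤ c)
    (S : Finset (Fin D × Fin N → (Fin L → Bool))) (hS : S.Nonempty)
    (hcard : (S.card : ℝ) ≥ (2 : ℝ) ^ (((D * N * L : ℕ) : ℝ) - c))
    (ρ : Fin D)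
    (q : (Fin L → Bool) → ℝ)
    (hq : ∀ y, q y = (1 / (N : ℝ)) *
      ∑ j : Fin N, ((S.filter fun A => A (ρ, j) = y).card : ℝ) / S.card) :
    SD q (fun _ => (1 : ℝ) / 2 ^ L) ≤ Real.sqrt (c / (2 * N)) := by

  classical
  set u : (Fin L → Bool) → ℝ := fun _ => (1 : ℝ) / 2 ^ L with hu
  set m : (Fin D × Fin N) → (Fin L → Bool) → ℝ :=
    fun k y => ((S.filter fun A => A k = y).card : ℝ) / S.card with hm
  have hScard : (0:ℝ) < S.card := by exact_mod_cast Finset.card_pos.2 hS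
  have hNpos : (0:ℝ) < N := by exact_mod_cast hN
  have h2L : (0:ℝ) < 2 ^ L := by positivity
  have hcardV : ((Fintype.card (Fin L → Bool)) : ℝ) = 2 ^ L := by
    simp [Fintype.card_fun]
  have hu0 : ∀ y, 0 < u y := fun y => by rw [hu]; positivity
  have hu1 : ∑ y : Fin L → Bool, u y = 1 := by
    rw [hu]
    rw [Finset.sum_const, Finset.card_univ, nsmul_eq_mul, hcardV]
    field_simp
  have hmnn : ∀ k y, 0 ≤ m k y := fun k y => by rw [hm]; positivity
  have hmsum : ∀ k, ∑ y, m k y = 1 := by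
    intro k
    rw [hm]
    simp only
    rw [← Finset.sum_div, marg_card_sum S k, div_self hScard.ne']
  have hq' : ∀ y, q y = (1 / (N : ℝ)) * ∑ j : Fin N, m (ρ, j) y := by
    intro y; rw [hq y]
  have hq0 : ∀ y, 0 ≤ q y := by
    intro y
    rw [hq' y]
    exact mul_nonneg (by positivity) (Finset.sum_nonneg fun j _ => hmnn _ _)
  have hq1 : ∑ y, q y = 1 := by
    rw [Finset.sum_congr rfl fun y _ => hq' y, ← Finset.mul_sum, Finset.sum_comm]
    rw [Finset.sum_congr rfl fun j (_ : j ∈ Finset.univ) => hmsum (ρ, j)]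
    rw [Finset.sum_const, Finset.card_univ, Fintype.card_fin, nsmul_eq_mul, mul_one]
    field_simp
  -- Pinsker
  have hpin := pinsker_nat q u hq0 hq1 hu0 hu1
  -- Convexity step
  have hconv : ∑ y, q y * Real.log (q y / u y) ≤
      (1/(N:ℝ)) * ∑ j : Fin N, ∑ y, m (ρ,j) y * Real.log (m (ρ,j) y / u y) := by
    have hy : ∀ y, q y * Real.log (q y / u y) ≤
        ∑ j : Fin N, (m (ρ,j) y / N) * Real.log (m (ρ,j) y / u y) := by
      intro y
      have hls := log_sum_ineq (Finset.univ : Finset (Fin N))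
        (fun j => m (ρ,j) y / N) (fun _ => u y / N)
        (fun j _ => by positivity) (fun j _ => by positivity)
      have hsa : ∑ j : Fin N, m (ρ,j) y / N = q y := by
        rw [hq' y, ← Finset.sum_div]
        ring
      have hsb : ∑ _j : Fin N, u y / N = u y := by
        rw [Finset.sum_const, Finset.card_univ, Fintype.card_fin, nsmul_eq_mul]
        field_simp
      rw [hsa, hsb] at hls
      refine le_trans hls (le_of_eq (Finset.sum_congr rfl fun j _ => ?_))
      congr 1
      rw [div_div_div_cancel_right₀]
      exact hNpos.ne'
    calc ∑ y, q y * Real.log (q y / u y)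
        ≤ ∑ y, ∑ j : Fin N, (m (ρ,j) y / N) * Real.log (m (ρ,j) y / u y) :=
          Finset.sum_le_sum fun y _ => hy y
      _ = (1/(N:ℝ)) * ∑ j : Fin N, ∑ y, m (ρ,j) y * Real.log (m (ρ,j) y / u y) := by
          rw [Finset.sum_comm, Finset.mul_sum]
          refine Finset.sum_congr rfl fun j _ => ?_
          rw [Finset.mul_sum]
          refine Finset.sum_congr rfl fun y _ => ?_
          ring
  -- per-entry KL = L log 2 - entropy
  have hKLk : ∀ k, ∑ y, m k y * Real.log (m k y / u y) =
      Real.log ((2:ℝ)^L) + ∑ y, m k y * Real.log (m k y) := by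
    intro k
    have hpt : ∀ y, m k y * Real.log (m k y / u y) =
        m k y * Real.log (m k y) + m k y * Real.log ((2:ℝ)^L) := by
      intro y
      rcases eq_or_lt_of_le (hmnn k y) with h0 | hpos
      · rw [← h0]; ring
      · have hdiv : m k y / u y = m k y * 2^L := by
          rw [hu]; simp only; rw [div_div_eq_mul_div, div_one]
        rw [hdiv, Real.log_mul hpos.ne' h2L.ne']
        ring
    rw [Finset.sum_congr rfl fun y _ => hpt y, Finset.sum_add_distrib,
      ← Finset.sum_mul, hmsum k, one_mul]
    ring
  -- entropy upper bound per entry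
  have hHle : ∀ k, -∑ y, m k y * Real.log (m k y) ≤ Real.log ((2:ℝ)^L) := by
    intro k
    have := neg_sum_mul_log_le (m k) (hmnn k) (hmsum k)
    rwa [hcardV] at this
  -- subadditivity
  have hsub : Real.log S.card ≤
      ∑ k : Fin D × Fin N, -(∑ y, m k y * Real.log (m k y)) := subadditivity S hS
  have hlogS : ((D*N*L : ℕ) : ℝ) * Real.log 2 - c * Real.log 2 ≤ Real.log S.card := by
    have h2 : (0:ℝ) < (2:ℝ) ^ (((D*N*L:ℕ):ℝ) - c) := Real.rpow_pos_of_pos two_pos _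
    have h3 := Real.log_le_log h2 hcard
    rw [Real.log_rpow two_pos] at h3
    nlinarith [h3]
  have hlog2L : Real.log ((2:ℝ)^L) = (L:ℝ) * Real.log 2 := by
    rw [Real.log_pow]
  -- split sum over rows
  have hsplit : ∑ k : Fin D × Fin N, -(∑ y, m k y * Real.log (m k y)) =
      ∑ i : Fin D, ∑ j : Fin N, -(∑ y, m (i,j) y * Real.log (m (i,j) y)) := by
    rw [Fintype.sum_prod_type]
  set T : ℝ := ∑ j : Fin N, -(∑ y, m (ρ,j) y * Real.log (m (ρ,j) y)) with hT
  clear_value T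
  have hrowbound : ∀ i : Fin D,
      ∑ j : Fin N, -(∑ y, m (i,j) y * Real.log (m (i,j) y)) ≤ (N:ℝ) * ((L:ℝ) * Real.log 2) := by
    intro i
    calc ∑ j : Fin N, -(∑ y, m (i,j) y * Real.log (m (i,j) y))
        ≤ ∑ _j : Fin N, (L:ℝ) * Real.log 2 :=
          Finset.sum_le_sum fun j _ => by rw [← hlog2L]; exact hHle (i,j)
      _ = (N:ℝ) * ((L:ℝ) * Real.log 2) := by
          rw [Finset.sum_const, Finset.card_univ, Fintype.card_fin, nsmul_eq_mul]
  have hTlb : Real.log S.card - ((D:ℝ) - 1) * ((N:ℝ) * ((L:ℝ) * Real.log 2)) ≤ T := by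
    have herase : T + ∑ i ∈ Finset.univ.erase ρ,
        ∑ j : Fin N, -(∑ y, m (i,j) y * Real.log (m (i,j) y)) =
        ∑ i : Fin D, ∑ j : Fin N, -(∑ y, m (i,j) y * Real.log (m (i,j) y)) := by
      rw [hT]
      exact Finset.add_sum_erase Finset.univ
        (fun i => ∑ j : Fin N, -(∑ y, m (i,j) y * Real.log (m (i,j) y)))
        (Finset.mem_univ ρ)
    have hother : ∑ i ∈ Finset.univ.erase ρ,
        ∑ j : Fin N, -(∑ y, m (i,j) y * Real.log (m (i,j) y)) ≤
        ((D:ℝ) - 1) * ((N:ℝ) * ((L:ℝ) * Real.log 2)) := by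
      calc ∑ i ∈ Finset.univ.erase ρ,
          ∑ j : Fin N, -(∑ y, m (i,j) y * Real.log (m (i,j) y))
          ≤ ∑ _i ∈ Finset.univ.erase ρ, (N:ℝ) * ((L:ℝ) * Real.log 2) :=
            Finset.sum_le_sum fun i _ => hrowbound i
        _ = ((D:ℝ) - 1) * ((N:ℝ) * ((L:ℝ) * Real.log 2)) := by
            rw [Finset.sum_const, nsmul_eq_mul, Finset.card_erase_of_mem (Finset.mem_univ ρ),
              Finset.card_univ, Fintype.card_fin]
            congr 1
            have : (1:ℕ) ≤ D := hD
            push_cast [Nat.cast_sub this]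
            ring
    rw [hsplit] at hsub
    linarith only [hsub, herase, hother]
  -- combine
  have hKL_bound : ∑ y, q y * Real.log (q y / u y) ≤ c / N := by
    have h1 : ∑ j : Fin N, ∑ y, m (ρ,j) y * Real.log (m (ρ,j) y / u y) =
        (N:ℝ) * ((L:ℝ) * Real.log 2) - T := by
      rw [Finset.sum_congr rfl fun j (_ : j ∈ Finset.univ) => hKLk (ρ,j)]
      rw [Finset.sum_add_distrib, Finset.sum_const, Finset.card_univ, Fintype.card_fin,
        nsmul_eq_mul, hlog2L, hT]
      rw [Finset.sum_neg_distrib]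
      ring
    have hcast : ((D*N*L : ℕ) : ℝ) = (D:ℝ) * N * L := by push_cast; ring
    have hlog2le : Real.log 2 ≤ 1 := by
      have := Real.log_le_sub_one_of_pos (by norm_num : (0:ℝ) < 2)
      linarith
    have hlog2pos : 0 < Real.log 2 := Real.log_pos (by norm_num)
    calc ∑ y, q y * Real.log (q y / u y)
        ≤ (1/(N:ℝ)) * ((N:ℝ) * ((L:ℝ) * Real.log 2) - T) := by
          rw [← h1]; exact hconv
      _ ≤ (1/(N:ℝ)) * (c * Real.log 2) := by
          apply mul_le_mul_of_nonneg_left _ (by positivity)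
          rw [hcast] at hlogS
          linarith only [hTlb, hlogS]
      _ ≤ c / N := by
          have hcl : c * Real.log 2 ≤ c := mul_le_of_le_one_right hc hlog2le
          calc (1/(N:ℝ)) * (c * Real.log 2) ≤ (1/(N:ℝ)) * c :=
                mul_le_mul_of_nonneg_left hcl (by positivity)
            _ = c / N := by ring
  -- finish
  have hSDdef : SD q u = (1/2) * ∑ y, |q y - u y| := rfl
  have hSDnn : 0 ≤ SD q u := by
    rw [hSDdef]
    exact mul_nonneg (by norm_num) (Finset.sum_nonneg fun y _ => abs_nonneg _)
  rw [Real.le_sqrt hSDnn (by positivity)]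
  rw [hSDdef]
  have : 2 * ((1/2) * ∑ y, |q y - u y|)^2 ≤ c / N := le_trans hpin hKL_bound
  have hfin : ((1/2) * ∑ y, |q y - u y|)^2 ≤ (c / N) / 2 := by linarith only [this]
  calc ((1/2) * ∑ y, |q y - u y|)^2 ≤ (c/N)/2 := hfin
    _ = c / (2*N) := by rw [div_div, mul_comm]
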